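/- Let C be an equivalence class of left weak Bruhat intervals in S_n under descent-preserving isomorphism. Then the set min(C) = {σ : [σ, ρ]_L ∈ C} of minima of intervals in C is a right weak Bruhat interval in (S_n, ≤_R), and likewise the set max(C) = {ρ : [σ, ρ]_L ∈ C} of maxima is a right weak Bruhat interval. -/

import Mathlib

/-- The left inversion set `Inv_L(σ) = {(i,j) : i < j, σ(i) > σ(j)}`. -/
def InvL {n : ℕ} (σ : Equiv.Perm (Fin n)) : Set (Fin n × Fin n) :=
  {p | p.1 < p.2 ∧ σ p.2 < σ p.1}

/-- The left weak Bruhat order: `σ ≤_L ρ` iff `Inv_L(σ) ⊆ Inv_L(ρ)`. -/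
def lLE {n : ℕ} (σ ρ : Equiv.Perm (Fin n)) : Prop := InvL σ ⊆ InvL ρ

/-- The right inversion set `Inv_R(σ) = {(σ(i),σ(j)) : i < j, σ(i) > σ(j)}`. -/
def InvR {n : ℕ} (σ : Equiv.Perm (Fin n)) : Set (Fin n × Fin n) :=
  {p | p.2 < p.1 ∧ σ⁻¹ p.1 < σ⁻¹ p.2}

/-- The right weak Bruhat order: `σ ≤_R ρ` iff `Inv_R(σ) ⊆ Inv_R(ρ)`. -/
def rLE {n : ℕ} (σ ρ : Equiv.Perm (Fin n)) : Prop := InvR σ ⊆ InvR ρ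

/-- The left weak Bruhat interval `[σ, ρ]_L`. -/
def lInterval {n : ℕ} (σ ρ : Equiv.Perm (Fin n)) : Set (Equiv.Perm (Fin n)) :=
  {γ | lLE σ γ ∧ lLE γ ρ}

/-- The right weak Bruhat interval `[σ, ρ]_R`. -/
def rInterval {n : ℕ} (σ ρ : Equiv.Perm (Fin n)) : Set (Equiv.Perm (Fin n)) :=
  {γ | rLE σ γ ∧ rLE γ ρ}

/-- The Coxeter length of a permutation, i.e. its number of inversions. -/
def len {n : ℕ} (σ : Equiv.Perm (Fin n)) : ℕ :=
  (Finset.univ.filter fun p : Fin n × Fin n => p.1 < p.2 ∧ σ p.2 < σ p.1).card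

/-- The simple transposition `s_i` (swapping the adjacent values `i`, `i+1`). -/
def sgen {n : ℕ} (i : Fin n) : Equiv.Perm (Fin (n + 1)) :=
  Equiv.swap i.castSucc i.succ

/-- The left descent set `Des_L(σ) = {i : ℓ(s_i σ) < ℓ(σ)}`. -/
def DesL {n : ℕ} (σ : Equiv.Perm (Fin (n + 1))) : Set (Fin n) :=
  {i | len (sgen i * σ) < len σ}

/-- `[σ₁,ρ₁]_L` and `[σ₂,ρ₂]_L` are equivalent under descent-preserving poset
isomorphism. -/
def DPEquiv {n : ℕ} (σ₁ ρ₁ σ₂ ρ₂ : Equiv.Perm (Fin (n + 1))) : Prop :=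
  lLE σ₁ ρ₁ ∧ lLE σ₂ ρ₂ ∧
  ∃ f : Equiv.Perm (Fin (n + 1)) → Equiv.Perm (Fin (n + 1)),
    Set.BijOn f (lInterval σ₁ ρ₁) (lInterval σ₂ ρ₂) ∧
    (∀ x ∈ lInterval σ₁ ρ₁, ∀ y ∈ lInterval σ₁ ρ₁, (lLE x y ↔ lLE (f x) (f y))) ∧
    (∀ x ∈ lInterval σ₁ ρ₁, DesL (f x) = DesL x)

lemma Equiv.Perm.inv_apply_self {α : Type*} (f : Equiv.Perm α) (x : α) : f⁻¹ (f x) = x :=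
  f.symm_apply_apply x

lemma Equiv.Perm.apply_inv_self {α : Type*} (f : Equiv.Perm α) (x : α) : f (f⁻¹ x) = x :=
  f.apply_symm_apply x

section Basics
variable {m : ℕ}

lemma mem_invL {x : Equiv.Perm (Fin m)} {p : Fin m × Fin m} :
    p ∈ InvL x ↔ p.1 < p.2 ∧ x p.2 < x p.1 := Iff.rfl

lemma mem_invL' {x : Equiv.Perm (Fin m)} {a b : Fin m} :
    (a, b) ∈ InvL x ↔ a < b ∧ x b < x a := Iff.rfl

lemma perm_lt_or {x : Equiv.Perm (Fin m)} {a b : Fin m} (h : a ≠ b) :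
    x a < x b ∨ x b < x a := by
  rcases lt_or_gt_of_ne (fun hh => h (x.injective hh)) with h1 | h1
  · exact Or.inl h1
  · exact Or.inr h1

lemma perm_eq_of_rel (u v : Equiv.Perm (Fin m))
    (h : ∀ a b : Fin m, a < b → (u a < u b ↔ v a < v b)) : u = v := by
  have key : StrictMono (fun k => v (u⁻¹ k)) := by
    intro i j hij
    have hne : u⁻¹ i ≠ u⁻¹ j := fun hh => hij.ne (by simpa using congrArg u hh)
    rcases lt_or_gt_of_ne hne with hc | hc
    · exact (h _ _ hc).mp (by simpa using hij)
    · have := (h _ _ hc).not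
      have h2 : ¬ u (u⁻¹ j) < u (u⁻¹ i) := by simpa using hij.asymm
      have h3 : ¬ v (u⁻¹ j) < v (u⁻¹ i) := this.mp h2
      rcases perm_lt_or (x := v) hne with h4 | h4
      · exact h4
      · exact absurd h4 h3
  have hsurj : Function.Surjective (fun k => v (u⁻¹ k)) := fun k => ⟨u (v⁻¹ k), by simp⟩
  let e := StrictMono.orderIsoOfSurjective _ key hsurj
  have hval : ∀ k, v (u⁻¹ k) = k := by
    intro k
    have h1 := Fin.coe_orderIso_apply e k
    have h2 : e k = v (u⁻¹ k) := congrFun (StrictMono.coe_orderIsoOfSurjective _ key hsurj) k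
    apply Fin.ext
    rw [← h1, h2]
  ext a
  have := hval (u a)
  simp only [Equiv.Perm.inv_apply_self] at this
  exact congrArg Fin.val this.symm
lemma invL_inj {u v : Equiv.Perm (Fin m)} (h : InvL u = InvL v) : u = v := by
  apply perm_eq_of_rel
  intro a b hab
  have h1 : (a, b) ∈ InvL u ↔ (a, b) ∈ InvL v := by rw [h]
  simp only [mem_invL', hab, true_and] at h1
  constructor
  · intro hu
    rcases perm_lt_or (x := v) hab.ne with h2 | h2
    · exact h2
    · exact absurd (h1.mpr h2) hu.asymm
  · intro hv
    rcases perm_lt_or (x := u) hab.ne with h2 | h2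
    · exact h2
    · exact absurd (h1.mp h2) hv.asymm
end Basics

section Sgen
variable {n : ℕ}

lemma adj_lt (i : Fin n) {p q : Fin (n+1)} (hpq : p < q) :
    sgen i p < sgen i q ↔ ¬(p = i.castSucc ∧ q = i.succ) := by
  have hcv : (i.castSucc : Fin (n+1)).val = i.val := rfl
  have hdv : (i.succ : Fin (n+1)).val = i.val + 1 := rfl
  have hcd : i.castSucc < i.succ := Fin.castSucc_lt_succ (i := i)
  have hpqv : p.val < q.val := hpq
  unfold sgen
  rcases eq_or_ne p i.castSucc with hpc | hpc
  · rcases eq_or_ne q i.succ with hqd | hqd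
    · subst hpc; subst hqd
      rw [Equiv.swap_apply_left, Equiv.swap_apply_right]
      exact iff_of_false hcd.asymm (by simp)
    · have hqc : q ≠ i.castSucc := ne_of_gt (hpc ▸ hpq)
      subst hpc
      rw [Equiv.swap_apply_left, Equiv.swap_apply_of_ne_of_ne hqc hqd]
      have hqv : q.val ≠ i.val + 1 := fun h => hqd (Fin.ext (h.trans hdv.symm))
      have : i.succ < q := by
        have : (i.succ : Fin (n+1)).val < q.val := by rw [hdv]; omega
        exact this
      exact iff_of_true this (by simp [hqd])
  · rcases eq_or_ne p i.succ with hpd | hpd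
    · have hqc : q ≠ i.castSucc := ne_of_gt (lt_trans (hpd ▸ hcd) hpq)
      have hqd : q ≠ i.succ := ne_of_gt (hpd ▸ hpq)
      subst hpd
      rw [Equiv.swap_apply_right, Equiv.swap_apply_of_ne_of_ne hqc hqd]
      have : i.castSucc < q := lt_trans hcd hpq
      exact iff_of_true this (by simp [hpc])
    · rw [Equiv.swap_apply_of_ne_of_ne hpc hpd]
      rcases eq_or_ne q i.castSucc with hqc | hqc
      · subst hqc
        rw [Equiv.swap_apply_left]
        exact iff_of_true (lt_trans hpq hcd) (by simp [hpc])
      · rcases eq_or_ne q i.succ with hqd | hqd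
        · subst hqd
          rw [Equiv.swap_apply_right]
          have hpv : p.val ≠ i.val := fun h => hpc (Fin.ext (h.trans hcv.symm))
          have : p < i.castSucc := by
            have : p.val < (i.castSucc : Fin (n+1)).val := by rw [hcv]; rw [hdv] at hpqv; omega
            exact this
          exact iff_of_true this (by simp [hpc])
        · rw [Equiv.swap_apply_of_ne_of_ne hqc hqd]
          exact iff_of_true hpq (by simp [hpc])

lemma invL_sgen (i : Fin n) (u : Equiv.Perm (Fin (n+1))) {a b : Fin (n+1)} (hab : a < b) :
    ((a, b) ∈ InvL (sgen i * u)) ↔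
      (if u a < u b then (u a = i.castSucc ∧ u b = i.succ)
       else ¬(u b = i.castSucc ∧ u a = i.succ)) := by
  have hne : u a ≠ u b := fun h => hab.ne (u.injective h)
  constructor
  · rintro ⟨-, hlt⟩
    simp only [Equiv.Perm.mul_apply] at hlt
    rcases lt_or_gt_of_ne hne with hc | hc
    · rw [if_pos hc]
      by_contra hcon
      exact absurd ((adj_lt i hc).mpr hcon) hlt.asymm
    · rw [if_neg (by exact hc.asymm)]
      intro hcon
      rw [hcon.1, hcon.2] at hlt
      unfold sgen at hlt
      rw [Equiv.swap_apply_left, Equiv.swap_apply_right] at hlt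
      exact absurd hlt (Fin.castSucc_lt_succ (i := i)).asymm
  · intro hcond
    refine ⟨hab, ?_⟩
    simp only [Equiv.Perm.mul_apply]
    rcases lt_or_gt_of_ne hne with hc | hc
    · rw [if_pos hc] at hcond
      rw [hcond.1, hcond.2]
      unfold sgen
      rw [Equiv.swap_apply_left, Equiv.swap_apply_right]
      exact Fin.castSucc_lt_succ (i := i)
    · rw [if_neg (by exact hc.asymm)] at hcond
      exact (adj_lt i hc).mpr hcond
end Sgen

section Len
variable {n : ℕ}

lemma sgen_inv (i : Fin n) : (sgen i)⁻¹ = sgen i := by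
  unfold sgen; exact Equiv.swap_inv _ _

lemma sgen_sq (i : Fin n) (u : Equiv.Perm (Fin (n+1))) : sgen i * (sgen i * u) = u := by
  rw [← mul_assoc]; unfold sgen; rw [Equiv.swap_mul_self, one_mul]

lemma mul_inv_apply {m : ℕ} (x g : Equiv.Perm (Fin m)) (v : Fin m) :
    (x * g)⁻¹ v = g⁻¹ (x⁻¹ v) := by
  rw [mul_inv_rev]; rfl

lemma sgen_mul_inv_apply (i : Fin n) (u : Equiv.Perm (Fin (n+1))) (v : Fin (n+1)) :
    (sgen i * u)⁻¹ v = u⁻¹ (sgen i v) := by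
  rw [mul_inv_rev, sgen_inv]; rfl

lemma len_lt_iff (i : Fin n) (u : Equiv.Perm (Fin (n+1))) :
    len (sgen i * u) < len u ↔ u⁻¹ i.succ < u⁻¹ i.castSucc := by
  classical
  set c := i.castSucc with hc
  set d := i.succ with hd
  have hcd : c < d := Fin.castSucc_lt_succ (i := i)
  set p0 := u⁻¹ c with hp0
  set q0 := u⁻¹ d with hq0
  have hup0 : u p0 = c := u.apply_symm_apply c
  have huq0 : u q0 = d := u.apply_symm_apply d
  have hne : p0 ≠ q0 := fun h => hcd.ne (by rw [← hup0, ← huq0, h])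
  have memF : ∀ (w : Equiv.Perm (Fin (n+1))) (p q : Fin (n+1)),
      ((p,q) ∈ Finset.univ.filter fun r : Fin (n+1) × Fin (n+1) => r.1 < r.2 ∧ w r.2 < w r.1)
      ↔ ((p,q) ∈ InvL w) := by
    intro w p q; simp [Finset.mem_filter, InvL]
  rcases lt_or_gt_of_ne hne with hlt | hlt
  · -- p0 < q0 : not a descent, length increases
    have hnotmem : (p0, q0) ∉ InvL u := by
      rintro ⟨-, hcon⟩; rw [hup0, huq0] at hcon; exact absurd hcon hcd.asymm
    have hins : (Finset.univ.filter fun r : Fin (n+1) × Fin (n+1) =>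
        r.1 < r.2 ∧ (sgen i * u) r.2 < (sgen i * u) r.1)
        = insert (p0, q0) (Finset.univ.filter fun r : Fin (n+1) × Fin (n+1) =>
          r.1 < r.2 ∧ u r.2 < u r.1) := by
      ext ⟨p, q⟩
      rw [Finset.mem_insert, memF, memF]
      by_cases hpq : p < q
      · rw [invL_sgen i u hpq]
        have hneuq : u p ≠ u q := fun hh => hpq.ne (u.injective hh)
        rcases lt_or_gt_of_ne hneuq with hor | hor
        · rw [if_pos hor]
          constructor
          · rintro ⟨h1, h2⟩
            left
            have e1 : p = p0 := u.injective (by rw [hup0, h1])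
            have e2 : q = q0 := u.injective (by rw [huq0, h2])
            rw [e1, e2]
          · rintro (he | hm)
            · have e1 : p = p0 := congrArg Prod.fst he
              have e2 : q = q0 := congrArg Prod.snd he
              subst e1; subst e2
              exact ⟨hup0, huq0⟩
            · exact absurd hm.2 hor.asymm
        · rw [if_neg hor.asymm]
          constructor
          · intro _
            right; exact ⟨hpq, hor⟩
          · intro _
            rintro ⟨h1, h2⟩
            have e1 : q = p0 := u.injective (by rw [hup0, h1])
            have e2 : p = q0 := u.injective (by rw [huq0, h2])
            rw [e1, e2] at hpq
            exact absurd hpq hlt.asymm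
      · constructor
        · rintro ⟨hcon, -⟩; exact absurd hcon hpq
        · rintro (he | ⟨hcon, -⟩)
          · have e1 : p = p0 := congrArg Prod.fst he
            have e2 : q = q0 := congrArg Prod.snd he
            rw [e1, e2] at hpq; exact absurd hlt hpq
          · exact absurd hcon hpq
    have hnotmemF : (p0, q0) ∉ (Finset.univ.filter fun r : Fin (n+1) × Fin (n+1) =>
        r.1 < r.2 ∧ u r.2 < u r.1) := by
      rw [memF]; exact hnotmem
    have : len (sgen i * u) = len u + 1 := by
      unfold len
      rw [hins, Finset.card_insert_of_notMem hnotmemF]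
    constructor
    · intro hcon; rw [this] at hcon; omega
    · intro hcon; exact absurd hcon hlt.asymm
  · -- q0 < p0 : descent, length decreases
    have hmem : (q0, p0) ∈ InvL u := ⟨hlt, by rw [hup0, huq0]; exact hcd⟩
    have hera : (Finset.univ.filter fun r : Fin (n+1) × Fin (n+1) =>
        r.1 < r.2 ∧ (sgen i * u) r.2 < (sgen i * u) r.1)
        = (Finset.univ.filter fun r : Fin (n+1) × Fin (n+1) =>
          r.1 < r.2 ∧ u r.2 < u r.1).erase (q0, p0) := by
      ext ⟨p, q⟩
      rw [Finset.mem_erase, memF, memF]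
      by_cases hpq : p < q
      · rw [invL_sgen i u hpq]
        have hneuq : u p ≠ u q := fun hh => hpq.ne (u.injective hh)
        rcases lt_or_gt_of_ne hneuq with hor | hor
        · rw [if_pos hor]
          constructor
          · rintro ⟨h1, h2⟩
            have e1 : p = p0 := u.injective (by rw [hup0, h1])
            have e2 : q = q0 := u.injective (by rw [huq0, h2])
            rw [e1, e2] at hpq
            exact absurd hpq hlt.asymm
          · rintro ⟨-, -, hcon⟩
            exact absurd hcon hor.asymm
        · rw [if_neg hor.asymm]
          constructor
          · intro hno
            refine ⟨?_, hpq, hor⟩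
            intro he
            have e1 : p = q0 := congrArg Prod.fst he
            have e2 : q = p0 := congrArg Prod.snd he
            subst e1; subst e2
            exact hno ⟨hup0, huq0⟩
          · rintro ⟨hne2, -, -⟩
            rintro ⟨h1, h2⟩
            have e1 : q = p0 := u.injective (by rw [hup0, h1])
            have e2 : p = q0 := u.injective (by rw [huq0, h2])
            exact hne2 (by rw [e1, e2])
      · constructor
        · rintro ⟨hcon, -⟩; exact absurd hcon hpq
        · rintro ⟨-, hcon, -⟩; exact absurd hcon hpq
    have hmemF : (q0, p0) ∈ (Finset.univ.filter fun r : Fin (n+1) × Fin (n+1) =>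
        r.1 < r.2 ∧ u r.2 < u r.1) := by rw [memF]; exact hmem
    have hcard : len (sgen i * u) = len u - 1 := by
      unfold len
      rw [hera, Finset.card_erase_of_mem hmemF]
    have hpos : 0 < len u := Finset.card_pos.mpr ⟨_, hmemF⟩
    constructor
    · intro _; exact hlt
    · intro _; rw [hcard]; omega

lemma desL_iff (i : Fin n) (u : Equiv.Perm (Fin (n+1))) :
    i ∈ DesL u ↔ u⁻¹ i.succ < u⁻¹ i.castSucc := len_lt_iff i u

lemma newdesc {y : Equiv.Perm (Fin (n+1))} {i k : Fin n} (hiy : i ∉ DesL y)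
    (hk : k ∈ DesL (sgen i * y)) (hky : k ∉ DesL y) : k = i := by
  rw [desL_iff] at hk hky hiy
  rw [sgen_mul_inv_apply, sgen_mul_inv_apply] at hk
  have hicd : y⁻¹ i.castSucc < y⁻¹ i.succ := by
    rcases lt_or_gt_of_ne (show y⁻¹ i.castSucc ≠ y⁻¹ i.succ from
      fun hh => (Fin.castSucc_lt_succ (i := i)).ne (by simpa using congrArg y hh)) with h1 | h1
    · exact h1
    · exact absurd h1 hiy
  have hkcd : y⁻¹ k.castSucc < y⁻¹ k.succ := by
    rcases lt_or_gt_of_ne (show y⁻¹ k.castSucc ≠ y⁻¹ k.succ from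
      fun hh => (Fin.castSucc_lt_succ (i := k)).ne (by simpa using congrArg y hh)) with h1 | h1
    · exact h1
    · exact absurd h1 hky
  by_contra hne
  have hvne : k.val ≠ i.val := fun hh => hne (Fin.ext hh)
  rcases Nat.lt_trichotomy k.val i.val with hv | hv | hv
  · rcases Nat.eq_or_lt_of_le (Nat.succ_le_of_lt hv) with hadj | hfar
    · -- k.val + 1 = i.val : k.succ = i.castSucc
      have e1 : (k.succ : Fin (n+1)) = i.castSucc := Fin.ext (by simp; omega)
      have e2 : sgen i k.castSucc = k.castSucc := by
        apply Equiv.swap_apply_of_ne_of_ne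
        · exact fun hh => by have := congrArg Fin.val hh; simp at this; omega
        · exact fun hh => by have := congrArg Fin.val hh; simp at this; omega
      rw [e1] at hk hkcd
      rw [e2] at hk
      have e3 : sgen i i.castSucc = i.succ := Equiv.swap_apply_left _ _
      rw [e3] at hk
      exact absurd (lt_trans hkcd hicd) hk.asymm
    · have e2 : sgen i k.castSucc = k.castSucc := by
        apply Equiv.swap_apply_of_ne_of_ne
        · exact fun hh => by have := congrArg Fin.val hh; simp at this; omega
        · exact fun hh => by have := congrArg Fin.val hh; simp at this; omega
      have e3 : sgen i k.succ = k.succ := by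
        apply Equiv.swap_apply_of_ne_of_ne
        · exact fun hh => by have := congrArg Fin.val hh; simp at this; omega
        · exact fun hh => by have := congrArg Fin.val hh; simp at this; omega
      rw [e2, e3] at hk
      exact absurd hk hkcd.asymm
  · exact hvne hv
  · rcases Nat.eq_or_lt_of_le (Nat.succ_le_of_lt hv) with hadj | hfar
    · -- i.val + 1 = k.val : k.castSucc = i.succ
      have e1 : (k.castSucc : Fin (n+1)) = i.succ := Fin.ext (by simp; omega)
      have e2 : sgen i k.succ = k.succ := by
        apply Equiv.swap_apply_of_ne_of_ne
        · exact fun hh => by have := congrArg Fin.val hh; simp at this; omega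
        · exact fun hh => by have := congrArg Fin.val hh; simp at this; omega
      rw [e1] at hk hkcd
      rw [e2] at hk
      have e3 : sgen i i.succ = i.castSucc := Equiv.swap_apply_right _ _
      rw [e3] at hk
      exact absurd (lt_trans hicd hkcd) hk.asymm
    · have e2 : sgen i k.castSucc = k.castSucc := by
        apply Equiv.swap_apply_of_ne_of_ne
        · exact fun hh => by have := congrArg Fin.val hh; simp at this; omega
        · exact fun hh => by have := congrArg Fin.val hh; simp at this; omega
      have e3 : sgen i k.succ = k.succ := by
        apply Equiv.swap_apply_of_ne_of_ne
        · exact fun hh => by have := congrArg Fin.val hh; simp at this; omega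
        · exact fun hh => by have := congrArg Fin.val hh; simp at this; omega
      rw [e2, e3] at hk
      exact absurd hk hkcd.asymm
end Len

section DownStep
variable {n : ℕ}

lemma down_step {x y : Equiv.Perm (Fin (n+1))} (hxy : lLE x y) (hne : x ≠ y) :
    ∃ (i : Fin n) (a b : Fin (n+1)), a < b ∧ (a,b) ∈ InvL y ∧ (a,b) ∉ InvL x ∧
      i ∈ DesL y ∧ lLE x (sgen i * y) ∧ lLE (sgen i * y) y ∧
      InvL (sgen i * y) = InvL y \ {(a,b)} := by
  classical
  set T := Finset.univ.filter
    (fun p : Fin (n+1) × Fin (n+1) => p ∈ InvL y ∧ p ∉ InvL x) with hT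
  have hTne : T.Nonempty := by
    by_contra hcon
    apply hne
    apply invL_inj
    apply Set.Subset.antisymm hxy
    intro p hp
    by_contra hpx
    exact hcon ⟨p, by simp [hT, Finset.mem_filter, hp, hpx]⟩
  obtain ⟨⟨a, b⟩, hmemT, hmin⟩ :=
    T.exists_min_image (fun p => (y p.1).val - (y p.2).val) hTne
  simp only [hT, Finset.mem_filter, Finset.mem_univ, true_and] at hmemT
  obtain ⟨hyab, hxab⟩ := hmemT
  have hab : a < b := hyab.1
  have hyba : y b < y a := hyab.2
  have hxab' : x a < x b := by
    rcases perm_lt_or (x := x) hab.ne with h1 | h1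
    · exact h1
    · exact absurd (mem_invL'.mpr ⟨hab, h1⟩) hxab
  have hminT : ∀ p q : Fin (n+1), (p,q) ∈ InvL y → (p,q) ∉ InvL x →
      (y a).val - (y b).val ≤ (y p).val - (y q).val := by
    intro p q h1 h2
    exact hmin (p, q) (by simp [hT, Finset.mem_filter, h1, h2])
  have hadj : (y a).val = (y b).val + 1 := by
    by_contra hno
    have hgap : (y b).val + 1 < (y a).val := by
      have : (y b).val < (y a).val := hyba
      omega
    have hvlt : (y b).val + 1 < n + 1 := lt_trans hgap (y a).isLt
    set v : Fin (n+1) := ⟨(y b).val + 1, hvlt⟩ with hv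
    set c := y⁻¹ v with hcdef
    have hyc : y c = v := y.apply_symm_apply v
    have hbc : y b < y c := by rw [hyc]; exact Nat.lt_succ_self _
    have hca : y c < y a := by rw [hyc]; exact hgap
    have hcna : c ≠ a := fun h => hca.ne (by rw [h])
    have hcnb : c ≠ b := fun h => hbc.ne (by rw [h])
    rcases lt_trichotomy c a with hc1 | hc1 | hc1
    · have h3 : (c, a) ∉ InvL x := by
        intro hm
        exact absurd (hxy hm).2 hca.asymm
      have h5 : x c < x a := by
        rcases perm_lt_or (x := x) hcna with h1 | h1
        · exact h1
        · exact absurd (mem_invL'.mpr ⟨hc1, h1⟩) h3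
      have h7 : (c, b) ∈ InvL y := ⟨lt_trans hc1 hab, hbc⟩
      have h8 : (c, b) ∉ InvL x := by
        rintro ⟨-, hcon⟩
        exact absurd (lt_trans h5 hxab') hcon.asymm
      have := hminT c b h7 h8
      rw [hyc] at this
      simp only [hv] at this
      omega
    · exact hcna hc1
    · rcases lt_trichotomy c b with hc2 | hc2 | hc2
      · by_cases h9 : (a, c) ∈ InvL x
        · have h6 : x c < x b := lt_trans h9.2 hxab'
          have h7 : (c, b) ∈ InvL y := ⟨hc2, hbc⟩
          have h8 : (c, b) ∉ InvL x := by
            rintro ⟨-, hcon⟩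
            exact absurd h6 hcon.asymm
          have := hminT c b h7 h8
          rw [hyc] at this
          simp only [hv] at this
          omega
        · have h7 : (a, c) ∈ InvL y := ⟨hc1, hca⟩
          have := hminT a c h7 h9
          rw [hyc] at this
          simp only [hv] at this
          omega
      · exact hcnb hc2
      · have h3 : (b, c) ∉ InvL x := by
          intro hm
          exact absurd (hxy hm).2 hbc.asymm
        have h5 : x b < x c := by
          rcases perm_lt_or (x := x) hcnb.symm with h1 | h1
          · exact h1
          · exact absurd (mem_invL'.mpr ⟨hc2, h1⟩) h3
        have h7 : (a, c) ∈ InvL y := ⟨lt_trans hab hc2, hca⟩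
        have h8 : (a, c) ∉ InvL x := by
          rintro ⟨-, hcon⟩
          exact absurd (lt_trans hxab' h5) hcon.asymm
        have := hminT a c h7 h8
        rw [hyc] at this
        simp only [hv] at this
        omega
  have hbn : (y b).val < n := by
    have := (y a).isLt
    omega
  set i : Fin n := ⟨(y b).val, hbn⟩ with hi
  have e_b : y b = i.castSucc := Fin.ext (by simp [hi])
  have e_a : y a = i.succ := Fin.ext (by simp [hi, hadj])
  have hdes : i ∈ DesL y := by
    rw [desL_iff, ← e_a, ← e_b]
    simp only [Equiv.Perm.inv_apply_self]
    exact hab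
  have hinveq : InvL (sgen i * y) = InvL y \ {(a, b)} := by
    ext ⟨p, q⟩
    by_cases hpq : p < q
    · rw [Set.mem_diff, Set.mem_singleton_iff]
      rw [invL_sgen i y hpq]
      have hpqne : y p ≠ y q := fun hh => hpq.ne (y.injective hh)
      rcases lt_or_gt_of_ne hpqne with hor | hor
      · rw [if_pos hor]
        constructor
        · rintro ⟨h1, h2⟩
          have e1 : p = b := y.injective (by rw [h1, e_b])
          have e2 : q = a := y.injective (by rw [h2, e_a])
          rw [e1, e2] at hpq
          exact absurd hab hpq.asymm
        · rintro ⟨⟨-, hcon⟩, -⟩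
          exact absurd hcon hor.asymm
      · rw [if_neg hor.asymm]
        constructor
        · intro hno
          refine ⟨⟨hpq, hor⟩, ?_⟩
          intro he
          have e1 : p = a := congrArg Prod.fst he
          have e2 : q = b := congrArg Prod.snd he
          subst e1; subst e2
          exact hno ⟨e_b ▸ rfl, e_a ▸ rfl⟩
        · rintro ⟨-, hne2⟩
          rintro ⟨h1, h2⟩
          have e1 : q = b := y.injective (by rw [h1, e_b])
          have e2 : p = a := y.injective (by rw [h2, e_a])
          exact hne2 (by rw [e1, e2])
    · constructor
      · rintro ⟨hcon, -⟩
        exact absurd hcon hpq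
      · rintro ⟨⟨hcon, -⟩, -⟩
        exact absurd hcon hpq
  refine ⟨i, a, b, hab, hyab, hxab, hdes, ?_, ?_, hinveq⟩
  · intro p hp
    rw [hinveq, Set.mem_diff, Set.mem_singleton_iff]
    refine ⟨hxy hp, ?_⟩
    rintro rfl
    exact hxab hp
  · intro p hp
    rw [hinveq] at hp
    exact hp.1
end DownStep

def EE {n : ℕ} (σ ρ : Equiv.Perm (Fin (n+1))) : Set (Fin (n+1) × Fin (n+1)) :=
  {p | p.1 < p.2 ∧ ∃ x, lLE σ x ∧ lLE x ρ ∧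
      ((x p.1).val = (x p.2).val + 1 ∨ (x p.2).val = (x p.1).val + 1)}
def KK {n : ℕ} (σ ρ : Equiv.Perm (Fin (n+1))) : Set (Fin (n+1) × Fin (n+1)) :=
  (InvL ρ \ InvL σ) ∪ EE σ ρ

section Core1
variable {n : ℕ}

lemma core1 {σ ρ g : Equiv.Perm (Fin (n+1))} (h : lLE σ ρ)
    (hg : ∀ p ∈ KK σ ρ, g⁻¹ p.1 < g⁻¹ p.2) : DPEquiv σ ρ (σ * g) (ρ * g) := by
  have hgK : ∀ a b : Fin (n+1), (a, b) ∈ KK σ ρ → g⁻¹ a < g⁻¹ b := fun a b hm => hg (a, b) hm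
  have claimA : ∀ x y : Equiv.Perm (Fin (n+1)), x ∈ lInterval σ ρ → y ∈ lInterval σ ρ →
      lLE x y → lLE (x * g) (y * g) := by
    intro x y hx hy hxy
    rintro ⟨a, b⟩ hp
    obtain ⟨hab, hxp⟩ := hp
    simp only [Equiv.Perm.mul_apply] at hxp
    refine ⟨hab, ?_⟩
    simp only [Equiv.Perm.mul_apply]
    have hne' : g a ≠ g b := fun hh => hab.ne (g.injective hh)
    rcases lt_or_gt_of_ne hne' with hor | hor
    · exact (hxy (mem_invL'.mpr ⟨hor, hxp⟩)).2
    · -- g b < g a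
      have h1 : (g b, g a) ∉ InvL x := fun hm => absurd hm.2 hxp.asymm
      have h2 : (g b, g a) ∉ InvL σ := fun hm => h1 (hx.1 hm)
      have h3 : (g b, g a) ∉ InvL ρ := by
        intro hm
        have : g⁻¹ (g b) < g⁻¹ (g a) := hgK _ _ (Or.inl ⟨hm, h2⟩)
        simp only [Equiv.Perm.inv_apply_self] at this
        exact absurd hab this.asymm
      have h4 : (g b, g a) ∉ InvL y := fun hm => h3 (hy.2 hm)
      have h5 : ¬ y (g a) < y (g b) := fun hc => h4 (mem_invL'.mpr ⟨hor, hc⟩)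
      rcases perm_lt_or (x := y) hne' with h6 | h6
      · exact absurd h6 h5
      · exact h6
  have claimR : ∀ x y : Equiv.Perm (Fin (n+1)), x ∈ lInterval σ ρ → y ∈ lInterval σ ρ →
      lLE (x * g) (y * g) → lLE x y := by
    intro x y hx hy hxy
    rintro ⟨a', b'⟩ hp
    obtain ⟨hab, hxp⟩ := hp
    have hne' : g⁻¹ a' ≠ g⁻¹ b' := fun hh => hab.ne (g⁻¹.injective hh)
    rcases lt_or_gt_of_ne hne' with hor | hor
    · have h1 : (g⁻¹ a', g⁻¹ b') ∈ InvL (x * g) := by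
        refine mem_invL'.mpr ⟨hor, ?_⟩
        simp only [Equiv.Perm.mul_apply, Equiv.Perm.apply_inv_self]
        exact hxp
      have h2 := hxy h1
      obtain ⟨-, h3⟩ := h2
      simp only [Equiv.Perm.mul_apply, Equiv.Perm.apply_inv_self] at h3
      exact mem_invL'.mpr ⟨hab, h3⟩
    · by_cases hσ : (a', b') ∈ InvL σ
      · exact hy.1 hσ
      · have hρ : (a', b') ∈ InvL ρ := hx.2 (mem_invL'.mpr ⟨hab, hxp⟩)
        have := hgK a' b' (Or.inl ⟨hρ, hσ⟩)
        exact absurd this hor.asymm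
  have claimS : ∀ δ, δ ∈ lInterval (σ * g) (ρ * g) → δ * g⁻¹ ∈ lInterval σ ρ := by
    intro δ hδ
    constructor
    · rintro ⟨a, b⟩ hp
      obtain ⟨hab, hσp⟩ := hp
      have hρp : ρ b < ρ a := (h (mem_invL'.mpr ⟨hab, hσp⟩)).2
      refine ⟨hab, ?_⟩
      simp only [Equiv.Perm.mul_apply]
      have hne' : g⁻¹ a ≠ g⁻¹ b := fun hh => hab.ne (g⁻¹.injective hh)
      rcases lt_or_gt_of_ne hne' with hor | hor
      · have h1 : (g⁻¹ a, g⁻¹ b) ∈ InvL (σ * g) := by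
          refine mem_invL'.mpr ⟨hor, ?_⟩
          simp only [Equiv.Perm.mul_apply, Equiv.Perm.apply_inv_self]
          exact hσp
        exact (hδ.1 h1).2
      · have h1 : (g⁻¹ b, g⁻¹ a) ∉ InvL (ρ * g) := by
          intro hm
          obtain ⟨-, hc⟩ := hm
          simp only [Equiv.Perm.mul_apply, Equiv.Perm.apply_inv_self] at hc
          exact absurd hρp hc.asymm
        have h2 : (g⁻¹ b, g⁻¹ a) ∉ InvL δ := fun hm => h1 (hδ.2 hm)
        have h3 : ¬ δ (g⁻¹ a) < δ (g⁻¹ b) := fun hc => h2 (mem_invL'.mpr ⟨hor, hc⟩)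
        rcases perm_lt_or (x := δ) hne' with h4 | h4
        · exact absurd h4 h3
        · exact h4
    · rintro ⟨a, b⟩ hp
      obtain ⟨hab, hδp⟩ := hp
      simp only [Equiv.Perm.mul_apply] at hδp
      refine ⟨hab, ?_⟩
      have hne' : g⁻¹ a ≠ g⁻¹ b := fun hh => hab.ne (g⁻¹.injective hh)
      rcases lt_or_gt_of_ne hne' with hor | hor
      · have h1 : (g⁻¹ a, g⁻¹ b) ∈ InvL δ := mem_invL'.mpr ⟨hor, hδp⟩
        have h2 := hδ.2 h1
        obtain ⟨-, h3⟩ := h2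
        simp only [Equiv.Perm.mul_apply, Equiv.Perm.apply_inv_self] at h3
        exact h3
      · by_cases hσ : σ b < σ a
        · exact (h (mem_invL'.mpr ⟨hab, hσ⟩)).2
        · have hσ' : σ a < σ b := by
            rcases perm_lt_or (x := σ) hab.ne with h4 | h4
            · exact h4
            · exact absurd h4 hσ
          have h1 : (g⁻¹ b, g⁻¹ a) ∈ InvL (σ * g) := by
            refine mem_invL'.mpr ⟨hor, ?_⟩
            simp only [Equiv.Perm.mul_apply, Equiv.Perm.apply_inv_self]
            exact hσ'
          have h2 := hδ.1 h1
          obtain ⟨-, h3⟩ := h2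
          exact absurd hδp h3.asymm
  have claimD : ∀ x, x ∈ lInterval σ ρ → DesL (x * g) = DesL x := by
    intro x hx
    ext i
    rw [desL_iff, desL_iff]
    have hinv : ∀ v, (x * g)⁻¹ v = g⁻¹ (x⁻¹ v) := by
      intro v; rw [mul_inv_rev]; rfl
    rw [hinv, hinv]
    set p := x⁻¹ i.castSucc with hpdef
    set q := x⁻¹ i.succ with hqdef
    have hxp : x p = i.castSucc := x.apply_symm_apply _
    have hxq : x q = i.succ := x.apply_symm_apply _
    have hpq : p ≠ q := fun hh => (Fin.castSucc_lt_succ (i := i)).ne (by rw [← hxp, ← hxq, hh])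
    have hadj : (x q).val = (x p).val + 1 := by rw [hxp, hxq]; simp
    rcases lt_or_gt_of_ne hpq with hor | hor
    · have hmem : (p, q) ∈ KK σ ρ := Or.inr ⟨hor, x, hx.1, hx.2, Or.inr hadj⟩
      have := hgK p q hmem
      exact iff_of_false this.asymm hor.asymm
    · have hmem : (q, p) ∈ KK σ ρ := Or.inr ⟨hor, x, hx.1, hx.2, Or.inl hadj⟩
      have := hgK q p hmem
      exact iff_of_true this hor
  have hσI : σ ∈ lInterval σ ρ := ⟨subset_refl _, h⟩
  have hρI : ρ ∈ lInterval σ ρ := ⟨h, subset_refl _⟩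
  refine ⟨h, claimA σ ρ hσI hρI h, fun x => x * g, ⟨?_, ?_, ?_⟩, ?_, claimD⟩
  · intro x hx
    exact ⟨claimA σ x hσI hx hx.1, claimA x ρ hx hρI hx.2⟩
  · intro x _ y _ hxy
    exact mul_right_cancel hxy
  · intro δ hδ
    refine ⟨δ * g⁻¹, claimS δ hδ, ?_⟩
    simp [mul_assoc]
  · intro x hx y hy
    exact ⟨claimA x y hx hy, claimR x y hx hy⟩
end Core1

section Core2
variable {n : ℕ}

lemma not_des_removal {i : Fin n} {u : Equiv.Perm (Fin (n+1))} (hi : i ∈ DesL u) :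
    i ∉ DesL (sgen i * u) := by
  rw [desL_iff] at hi ⊢
  rw [sgen_mul_inv_apply, sgen_mul_inv_apply]
  unfold sgen
  rw [Equiv.swap_apply_left, Equiv.swap_apply_right]
  exact hi.asymm

lemma core2 {σ ρ a' b' : Equiv.Perm (Fin (n+1))} (hdp : DPEquiv σ ρ a' b') :
    b' = ρ * (σ⁻¹ * a') ∧
    ∀ p ∈ KK σ ρ, (σ⁻¹ * a')⁻¹ p.1 < (σ⁻¹ * a')⁻¹ p.2 := by
  obtain ⟨h1, h2, f, hbij, hord, hdes⟩ := hdp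
  set g := σ⁻¹ * a' with hgdef
  have hσg : σ * g = a' := by rw [hgdef, ← mul_assoc, mul_inv_cancel, one_mul]
  have hσI : σ ∈ lInterval σ ρ := ⟨subset_refl _, h1⟩
  have hρI : ρ ∈ lInterval σ ρ := ⟨h1, subset_refl _⟩
  -- f σ = a'
  have hfσ : f σ = a' := by
    obtain ⟨z, hz, hfz⟩ := hbij.2.2 (⟨subset_refl _, h2⟩ : a' ∈ lInterval a' b')
    have h3 : lLE (f σ) (f z) := (hord σ hσI z hz).mp hz.1
    rw [hfz] at h3
    have h4 : lLE a' (f σ) := (hbij.1 hσI).1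
    exact invL_inj (Set.Subset.antisymm h3 h4)
  have hfρ : f ρ = b' := by
    obtain ⟨z, hz, hfz⟩ := hbij.2.2 (⟨h2, subset_refl _⟩ : b' ∈ lInterval a' b')
    have h3 : lLE (f z) (f ρ) := (hord z hz ρ hρI).mp hz.2
    rw [hfz] at h3
    have h4 : lLE (f ρ) b' := (hbij.1 hρI).2
    exact invL_inj (Set.Subset.antisymm h4 h3)
  have key : ∀ k, ∀ x, x ∈ lInterval σ ρ → len x = k → f x = x * g := by
    intro k
    induction k using Nat.strong_induction_on with
    | _ k IH =>
      intro x hx hlen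
      by_cases hxσ : x = σ
      · subst hxσ
        rw [hfσ, hσg]
      · obtain ⟨i, a, b, hab, hyab, hnab, hdesi, hle1, hle2, hinveq⟩ :=
          down_step hx.1 (Ne.symm hxσ)
        set y := sgen i * x with hydef
        have hyI : y ∈ lInterval σ ρ := ⟨hle1, fun p hp => hx.2 (hle2 hp)⟩
        have hleny : len y < k := by
          rw [← hlen]
          exact hdesi
        have hfy : f y = y * g := IH (len y) hleny y hyI rfl
        have hyx : y ≠ x := by
          intro hc
          have : (a, b) ∈ InvL y := hc ▸ hyab
          rw [hinveq] at this
          exact this.2 rfl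
        have hfy_lt : lLE (f y) (f x) := (hord y hyI x hx).mp hle2
        have hne_f : f y ≠ f x := fun hc => hyx (hbij.2.1 hyI hx hc)
        obtain ⟨j, a2, b2, hab2, hmem2, hnm2, hdesj, hle1', hle2', hinveq'⟩ :=
          down_step hfy_lt hne_f
        have hz'eq : sgen j * f x = f y := by
          by_contra hzne
          have hz'mem : sgen j * f x ∈ lInterval a' b' := by
            constructor
            · intro p hp
              exact hle1' ((hfσ ▸ (hord σ hσI y hyI).mp hyI.1) hp)
            · intro p hp
              exact (hfρ ▸ (hord x hx ρ hρI).mp hx.2) (hle2' hp)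
          obtain ⟨z, hzI, hfzz⟩ := hbij.2.2 hz'mem
          have hyz : lLE y z := (hord y hyI z hzI).mpr (by rw [hfzz]; exact hle1')
          have hzx : lLE z x := (hord z hzI x hx).mpr (by rw [hfzz]; exact hle2')
          have hzy : z ≠ y := by
            intro hc
            rw [hc, hfy] at hfzz
            exact hzne (hfzz.symm ▸ hfy.symm)
          have hzx' : z ≠ x := by
            intro hc
            rw [hc] at hfzz
            have : (a2, b2) ∈ InvL (sgen j * f x) := hfzz ▸ hmem2
            rw [hinveq'] at this
            exact this.2 rfl
          by_cases habz : (a, b) ∈ InvL z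
          · apply hzx'
            apply invL_inj
            apply Set.Subset.antisymm hzx
            intro p hp
            by_cases hpe : p = (a, b)
            · rw [hpe]; exact habz
            · exact hyz (by rw [hinveq]; exact ⟨hp, hpe⟩)
          · apply hzy
            apply invL_inj
            apply Set.Subset.antisymm _ hyz
            intro p hp
            rw [hinveq]
            refine ⟨hzx hp, ?_⟩
            rintro rfl
            exact habz hp
        have hdx : DesL (f x) = DesL x := hdes x hx
        have hdy : DesL (f y) = DesL y := hdes y hyI
        have hjx : j ∈ DesL x := hdx ▸ hdesj
        have hjy : j ∉ DesL y := by
          rw [← hdy, ← hz'eq]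
          exact not_des_removal hdesj
        have hiy : i ∉ DesL y := not_des_removal hdesi
        have hxy2 : x = sgen i * y := (sgen_sq i x).symm
        have hji : j = i := by
          apply newdesc hiy _ hjy
          rw [← hxy2]
          exact hjx
        have : f x = sgen j * f y := by
          rw [← hz'eq, sgen_sq]
        rw [this, hji, hfy, ← mul_assoc, ← hxy2]
  have hfρ2 : b' = ρ * g := by rw [← hfρ, key (len ρ) ρ hρI rfl]
  refine ⟨hfρ2, ?_⟩
  rintro ⟨p1, p2⟩ hm
  rcases hm with ⟨hρm, hσm⟩ | ⟨hp12, x, hxσ, hxρ, hor⟩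
  · simp only at *
    have hp12 : p1 < p2 := hρm.1
    have hσ12 : σ p1 < σ p2 := by
      rcases perm_lt_or (x := σ) hp12.ne with hh | hh
      · exact hh
      · exact absurd (mem_invL'.mpr ⟨hp12, hh⟩) hσm
    by_contra hcon
    have hgne : g⁻¹ p1 ≠ g⁻¹ p2 := fun hh => hp12.ne (g⁻¹.injective hh)
    have hglt : g⁻¹ p2 < g⁻¹ p1 := by
      rcases lt_or_gt_of_ne hgne with hh | hh
      · exact absurd hh hcon
      · exact hh
    have hmem : (g⁻¹ p2, g⁻¹ p1) ∈ InvL (σ * g) := by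
      refine mem_invL'.mpr ⟨hglt, ?_⟩
      simp only [Equiv.Perm.mul_apply, Equiv.Perm.apply_inv_self]
      exact hσ12
    have := h2 (hσg ▸ hmem)
    rw [hfρ2] at this
    obtain ⟨-, hc⟩ := this
    simp only [Equiv.Perm.mul_apply, Equiv.Perm.apply_inv_self] at hc
    exact absurd hρm.2 hc.asymm
  · simp only at *
    have hxI : x ∈ lInterval σ ρ := ⟨hxσ, hxρ⟩
    have hfx : f x = x * g := key (len x) x hxI rfl
    have hdeq : DesL (x * g) = DesL x := hfx ▸ hdes x hxI
    have hinvxg : ∀ v, (x * g)⁻¹ v = g⁻¹ (x⁻¹ v) := by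
      intro v; rw [mul_inv_rev]; rfl
    rcases hor with hadj | hadj
    · -- (x p1).val = (x p2).val + 1 : descent present
      have hbn : (x p2).val < n := by
        have := (x p1).isLt
        omega
      set i : Fin n := ⟨(x p2).val, hbn⟩ with hi
      have e2 : x p2 = i.castSucc := Fin.ext (by simp [hi])
      have e1 : x p1 = i.succ := Fin.ext (by simp [hi, hadj])
      have hidx : i ∈ DesL x := by
        rw [desL_iff, ← e1, ← e2]
        simp only [Equiv.Perm.inv_apply_self]
        exact hp12
      have := hdeq ▸ hidx
      rw [desL_iff, hinvxg, hinvxg, ← e1, ← e2] at this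
      simp only [Equiv.Perm.inv_apply_self] at this
      exact this
    · -- (x p2).val = (x p1).val + 1 : no descent
      have hbn : (x p1).val < n := by
        have := (x p2).isLt
        omega
      set i : Fin n := ⟨(x p1).val, hbn⟩ with hi
      have e1 : x p1 = i.castSucc := Fin.ext (by simp [hi])
      have e2 : x p2 = i.succ := Fin.ext (by simp [hi, hadj])
      have hidx : i ∉ DesL x := by
        rw [desL_iff, ← e1, ← e2]
        simp only [Equiv.Perm.inv_apply_self]
        exact hp12.asymm
      have hnd := hdeq ▸ hidx
      rw [desL_iff, hinvxg, hinvxg, ← e1, ← e2] at hnd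
      simp only [Equiv.Perm.inv_apply_self] at hnd
      rcases lt_or_gt_of_ne (show g⁻¹ p1 ≠ g⁻¹ p2 from
        fun hh => hp12.ne (g⁻¹.injective hh)) with hh | hh
      · exact hh
      · exact absurd hh hnd
end Core2

section Generic
variable {m : ℕ}

lemma generic_interval (B : Fin m → Fin m → Prop)
    (hedge : ∀ u w, B u w → ∀ v, ((u < v ∧ v < w) ∨ (w < v ∧ v < u)) →
        Relation.TransGen B u v ∨ Relation.TransGen B v w)
    (e0 : Equiv.Perm (Fin m)) (h0 : ∀ u w, B u w → e0⁻¹ u < e0⁻¹ w) :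
    ∃ a b : Equiv.Perm (Fin m), rLE a b ∧
      {γ : Equiv.Perm (Fin m) | ∀ u w, B u w → γ⁻¹ u < γ⁻¹ w} = rInterval a b := by
  classical
  set TG := Relation.TransGen B with hTG
  have hext0 : ∀ (γ : Equiv.Perm (Fin m)), (∀ u w, B u w → γ⁻¹ u < γ⁻¹ w) →
      ∀ u w, TG u w → γ⁻¹ u < γ⁻¹ w := by
    intro γ hγ u w htg
    induction htg with
    | single hb => exact hγ _ _ hb
    | tail _ hb ih => exact lt_trans ih (hγ _ _ hb)
  have hirr : ∀ u, ¬ TG u u := fun u hu => lt_irrefl _ (hext0 e0 h0 u u hu)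
  have hasym : ∀ u w, TG u w → ¬ TG w u := fun u w h1 h2 => hirr u (h1.trans h2)
  have hne_of_TG : ∀ u w, TG u w → u ≠ w := by
    rintro u w h1 rfl; exact hirr u h1
  have between : ∀ u w, TG u w → ∀ v, ((u < v ∧ v < w) ∨ (w < v ∧ v < u)) →
      TG u v ∨ TG v w := by
    intro u w htg
    induction htg with
    | single hb => exact fun v hv => hedge _ _ hb v hv
    | @tail z w htguz hb ih =>
      intro v hv
      by_cases hvz : v = z
      · subst hvz
        exact Or.inl htguz
      · by_cases hcase : (u < v ∧ v < z) ∨ (z < v ∧ v < u)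
        · rcases ih v hcase with h1 | h1
          · exact Or.inl h1
          · exact Or.inr (h1.tail hb)
        · have hcase2 : (z < v ∧ v < w) ∨ (w < v ∧ v < z) := by
            have huz := hne_of_TG _ _ htguz
            simp only [Fin.lt_def, not_or, not_and, not_lt] at hcase hv ⊢
            have hvzv : v.val ≠ z.val := fun hh => hvz (Fin.ext hh)
            omega
          rcases hedge _ _ hb v hcase2 with h1 | h1
          · exact Or.inl (htguz.trans h1)
          · exact Or.inr h1
  -- the two linear orders
  set slt1 : Fin m → Fin m → Prop :=
    fun u v => TG u v ∨ (¬ TG u v ∧ ¬ TG v u ∧ u.val < v.val) with hslt1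
  set slt2 : Fin m → Fin m → Prop :=
    fun u v => TG u v ∨ (¬ TG u v ∧ ¬ TG v u ∧ v.val < u.val) with hslt2
  have hirr1 : ∀ u, ¬ slt1 u u := by
    rintro u (h | ⟨-, -, h⟩)
    · exact hirr u h
    · exact lt_irrefl _ h
  have hirr2 : ∀ u, ¬ slt2 u u := by
    rintro u (h | ⟨-, -, h⟩)
    · exact hirr u h
    · exact lt_irrefl _ h
  have hasym1 : ∀ u v, slt1 u v → ¬ slt1 v u := by
    rintro u v (h1 | ⟨hn1, hn1', hl1⟩) (h2 | ⟨hn2, hn2', hl2⟩)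
    · exact hasym _ _ h1 h2
    · exact hn2' h1
    · exact hn1' h2
    · omega
  have hasym2 : ∀ u v, slt2 u v → ¬ slt2 v u := by
    rintro u v (h1 | ⟨hn1, hn1', hl1⟩) (h2 | ⟨hn2, hn2', hl2⟩)
    · exact hasym _ _ h1 h2
    · exact hn2' h1
    · exact hn1' h2
    · omega
  have htot1 : ∀ u v, u ≠ v → slt1 u v ∨ slt1 v u := by
    intro u v hne
    by_cases h1 : TG u v
    · exact Or.inl (Or.inl h1)
    · by_cases h2 : TG v u
      · exact Or.inr (Or.inl h2)
      · have : u.val ≠ v.val := fun hh => hne (Fin.ext hh)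
        rcases Nat.lt_or_ge u.val v.val with hl | hl
        · exact Or.inl (Or.inr ⟨h1, h2, hl⟩)
        · exact Or.inr (Or.inr ⟨h2, h1, by omega⟩)
  have htot2 : ∀ u v, u ≠ v → slt2 u v ∨ slt2 v u := by
    intro u v hne
    by_cases h1 : TG u v
    · exact Or.inl (Or.inl h1)
    · by_cases h2 : TG v u
      · exact Or.inr (Or.inl h2)
      · have : u.val ≠ v.val := fun hh => hne (Fin.ext hh)
        rcases Nat.lt_or_ge u.val v.val with hl | hl
        · exact Or.inr (Or.inr ⟨h2, h1, hl⟩)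
        · exact Or.inl (Or.inr ⟨h1, h2, by omega⟩)
  have htrans1 : ∀ u v w, slt1 u v → slt1 v w → slt1 u w := by
    rintro u v w (h1 | ⟨hn1, hn1', hl1⟩) (h2 | ⟨hn2, hn2', hl2⟩)
    · exact Or.inl (h1.trans h2)
    · -- TG u v, incomp v w, v < w
      by_cases hTG : TG u w
      · exact Or.inl hTG
      · refine Or.inr ⟨hTG, fun hc => hn2' (hc.trans h1), ?_⟩
        by_contra hge
        have hneuw : u ≠ w := fun hh => hn2' (hh ▸ h1)
        have : w.val < u.val := by
          have : u.val ≠ w.val := fun hh => hneuw (Fin.ext hh)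
          omega
        rcases between u v h1 w (Or.inr ⟨Fin.lt_def.mpr hl2, Fin.lt_def.mpr this⟩) with hc | hc
        · exact hTG hc
        · exact hn2' hc
    · -- incomp u v, u < v, TG v w
      by_cases hTG : TG u w
      · exact Or.inl hTG
      · refine Or.inr ⟨hTG, fun hc => hn1' (h2.trans hc), ?_⟩
        by_contra hge
        have hneuw : u ≠ w := fun hh => hn1' (hh ▸ h2)
        have hwu : w.val < u.val := by
          have : u.val ≠ w.val := fun hh => hneuw (Fin.ext hh)
          omega
        rcases between v w h2 u (Or.inr ⟨Fin.lt_def.mpr hwu, Fin.lt_def.mpr hl1⟩) with hc | hc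
        · exact hn1' hc
        · exact hTG hc
    · -- incomp both, u < v < w
      by_cases hTG : TG u w
      · exact Or.inl hTG
      · refine Or.inr ⟨hTG, ?_, by omega⟩
        intro hc
        rcases between w u hc v (Or.inr ⟨Fin.lt_def.mpr hl1, Fin.lt_def.mpr hl2⟩) with h | h
        · exact hn2' h
        · exact hn1' h
  have htrans2 : ∀ u v w, slt2 u v → slt2 v w → slt2 u w := by
    rintro u v w (h1 | ⟨hn1, hn1', hl1⟩) (h2 | ⟨hn2, hn2', hl2⟩)
    · exact Or.inl (h1.trans h2)
    · by_cases hTG : TG u w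
      · exact Or.inl hTG
      · refine Or.inr ⟨hTG, fun hc => hn2' (hc.trans h1), ?_⟩
        by_contra hge
        have hneuw : u ≠ w := fun hh => hn2' (hh ▸ h1)
        have : u.val < w.val := by
          have : u.val ≠ w.val := fun hh => hneuw (Fin.ext hh)
          omega
        rcases between u v h1 w (Or.inl ⟨Fin.lt_def.mpr this, Fin.lt_def.mpr hl2⟩) with hc | hc
        · exact hTG hc
        · exact hn2' hc
    · by_cases hTG : TG u w
      · exact Or.inl hTG
      · refine Or.inr ⟨hTG, fun hc => hn1' (h2.trans hc), ?_⟩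
        by_contra hge
        have hneuw : u ≠ w := fun hh => hn1' (hh ▸ h2)
        have hwu : u.val < w.val := by
          have : u.val ≠ w.val := fun hh => hneuw (Fin.ext hh)
          omega
        rcases between v w h2 u (Or.inl ⟨Fin.lt_def.mpr hl1, Fin.lt_def.mpr hwu⟩) with hc | hc
        · exact hn1' hc
        · exact hTG hc
    · by_cases hTG : TG u w
      · exact Or.inl hTG
      · refine Or.inr ⟨hTG, ?_, by omega⟩
        intro hc
        rcases between w u hc v (Or.inl ⟨Fin.lt_def.mpr hl2, Fin.lt_def.mpr hl1⟩) with h | h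
        · exact hn2' h
        · exact hn1' h
  -- rank permutations
  have hcard : ∀ (slt : Fin m → Fin m → Prop), (∀ u, ¬ slt u u) →
      ∀ u, (Finset.univ.filter fun v => slt v u).card < m := by
    intro slt hirr' u
    have hsub : (Finset.univ.filter fun v => slt v u) ⊂ Finset.univ := by
      rw [Finset.ssubset_univ_iff]
      intro hcon
      have : u ∈ Finset.univ.filter fun v => slt v u := by rw [hcon]; exact Finset.mem_univ u
      rw [Finset.mem_filter] at this
      exact hirr' u this.2
    have := Finset.card_lt_card hsub
    simpa using this
  set r1 : Fin m → Fin m := fun u => ⟨_, hcard slt1 hirr1 u⟩ with hr1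
  set r2 : Fin m → Fin m := fun u => ⟨_, hcard slt2 hirr2 u⟩ with hr2
  have hmono : ∀ (slt : Fin m → Fin m → Prop)
      (htr : ∀ u v w, slt u v → slt v w → slt u w) (hir : ∀ u, ¬ slt u u)
      (u v : Fin m), slt u v →
      (Finset.univ.filter fun z => slt z u).card < (Finset.univ.filter fun z => slt z v).card := by
    intro slt htr hir u v huv
    apply Finset.card_lt_card
    constructor
    · intro z hz
      rw [Finset.mem_filter] at hz ⊢
      exact ⟨Finset.mem_univ z, htr _ _ _ hz.2 huv⟩
    · intro hcon
      have : u ∈ Finset.univ.filter fun z => slt z v := by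
        rw [Finset.mem_filter]; exact ⟨Finset.mem_univ u, huv⟩
      have := hcon this
      rw [Finset.mem_filter] at this
      exact hir u this.2
  have hr1lt : ∀ u v, r1 u < r1 v ↔ slt1 u v := by
    intro u v
    constructor
    · intro hlt
      have hne : u ≠ v := by rintro rfl; exact lt_irrefl _ hlt
      rcases htot1 u v hne with h | h
      · exact h
      · have hm := hmono slt1 htrans1 hirr1 v u h
        rw [hr1] at hlt
        simp only [Fin.mk_lt_mk] at hlt
        omega
    · intro h
      rw [hr1]
      simp only [Fin.mk_lt_mk]
      exact hmono slt1 htrans1 hirr1 u v h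
  have hr2lt : ∀ u v, r2 u < r2 v ↔ slt2 u v := by
    intro u v
    constructor
    · intro hlt
      have hne : u ≠ v := by rintro rfl; exact lt_irrefl _ hlt
      rcases htot2 u v hne with h | h
      · exact h
      · have hm := hmono slt2 htrans2 hirr2 v u h
        rw [hr2] at hlt
        simp only [Fin.mk_lt_mk] at hlt
        omega
    · intro h
      rw [hr2]
      simp only [Fin.mk_lt_mk]
      exact hmono slt2 htrans2 hirr2 u v h
  have hbij1 : Function.Bijective r1 := by
    rw [← Finite.injective_iff_bijective]
    intro u v huv
    by_contra hne
    rcases htot1 u v hne with h | h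
    · exact absurd (huv ▸ (hr1lt u v).mpr h) (lt_irrefl _)
    · exact absurd (huv ▸ (hr1lt v u).mpr h) (lt_irrefl _)
  have hbij2 : Function.Bijective r2 := by
    rw [← Finite.injective_iff_bijective]
    intro u v huv
    by_contra hne
    rcases htot2 u v hne with h | h
    · exact absurd (huv ▸ (hr2lt u v).mpr h) (lt_irrefl _)
    · exact absurd (huv ▸ (hr2lt v u).mpr h) (lt_irrefl _)
  set e1 : Equiv.Perm (Fin m) := Equiv.ofBijective r1 hbij1 with he1
  set e2 : Equiv.Perm (Fin m) := Equiv.ofBijective r2 hbij2 with he2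
  have hγ1 : ∀ u, (e1⁻¹)⁻¹ u = r1 u := by intro u; rw [inv_inv]; rfl
  have hγ2 : ∀ u, (e2⁻¹)⁻¹ u = r2 u := by intro u; rw [inv_inv]; rfl
  refine ⟨e1⁻¹, e2⁻¹, ?_, ?_⟩
  · rintro ⟨p1, p2⟩ ⟨h21, hord⟩
    simp only at h21 hord
    rw [hγ1, hγ1] at hord
    have hs1 : slt1 p1 p2 := (hr1lt _ _).mp hord
    have hTG12 : TG p1 p2 := by
      rcases hs1 with h | ⟨-, -, hl⟩
      · exact h
      · exact absurd (Fin.lt_def.mp h21) (by omega)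
    refine ⟨h21, ?_⟩
    simp only
    rw [hγ2, hγ2]
    exact (hr2lt _ _).mpr (Or.inl hTG12)
  · ext γ
    simp only [Set.mem_setOf_eq]
    constructor
    · intro hγ
      have hext := hext0 γ hγ
      constructor
      · rintro ⟨p1, p2⟩ ⟨h21, hord⟩
        simp only at h21 hord ⊢
        rw [hγ1, hγ1] at hord
        have hs1 : slt1 p1 p2 := (hr1lt _ _).mp hord
        have hTG12 : TG p1 p2 := by
          rcases hs1 with h | ⟨-, -, hl⟩
          · exact h
          · exact absurd (Fin.lt_def.mp h21) (by omega)
        exact ⟨h21, hext _ _ hTG12⟩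
      · rintro ⟨p1, p2⟩ ⟨h21, hord⟩
        simp only at h21 hord ⊢
        refine ⟨h21, ?_⟩
        rw [hγ2, hγ2]
        apply (hr2lt _ _).mpr
        by_cases hTG12 : TG p1 p2
        · exact Or.inl hTG12
        · refine Or.inr ⟨hTG12, ?_, Fin.lt_def.mp h21⟩
          intro hc
          exact absurd (hext _ _ hc) hord.asymm
    · rintro ⟨hle1, hle2⟩ u w hB
      have hTGuw : TG u w := Relation.TransGen.single hB
      have hne : u ≠ w := hne_of_TG _ _ hTGuw
      by_contra hcon
      have hlt : γ⁻¹ w < γ⁻¹ u := by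
        rcases lt_or_gt_of_ne (show γ⁻¹ u ≠ γ⁻¹ w from fun hh => hne (γ⁻¹.injective hh)) with h | h
        · exact absurd h hcon
        · exact h
      rcases lt_or_gt_of_ne hne with hor | hor
      · have hmem : (w, u) ∈ InvR γ := ⟨hor, hlt⟩
        have := hle2 hmem
        obtain ⟨-, hord⟩ := this
        simp only at hord
        rw [hγ2, hγ2] at hord
        rcases (hr2lt _ _).mp hord with h | ⟨-, hnc, -⟩
        · exact hasym _ _ hTGuw h
        · exact hnc hTGuw
      · have hmem : (u, w) ∈ InvR (e1⁻¹) := by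
          refine ⟨hor, ?_⟩
          simp only
          rw [hγ1, hγ1]
          exact (hr1lt _ _).mpr (Or.inl hTGuw)
        have := hle1 hmem
        exact absurd this.2 hlt.asymm
end Generic

section Edge
variable {n : ℕ}

lemma KK_lt {σ ρ : Equiv.Perm (Fin (n+1))} {p : Fin (n+1) × Fin (n+1)} (hp : p ∈ KK σ ρ) :
    p.1 < p.2 := by
  rcases hp with ⟨h1, -⟩ | ⟨h1, -⟩
  · exact h1.1
  · exact h1

def BRmin {n : ℕ} (σ ρ : Equiv.Perm (Fin (n+1))) : Fin (n+1) → Fin (n+1) → Prop :=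
  fun u w => ∃ p, p ∈ KK σ ρ ∧ σ p.1 = u ∧ σ p.2 = w

lemma edge_min {σ ρ : Equiv.Perm (Fin (n+1))} (h : lLE σ ρ) :
    ∀ u w, BRmin σ ρ u w → ∀ v, ((u < v ∧ v < w) ∨ (w < v ∧ v < u)) →
      Relation.TransGen (BRmin σ ρ) u v ∨ Relation.TransGen (BRmin σ ρ) v w := by
  rintro u w ⟨⟨a, b⟩, hKK, rfl, rfl⟩ v hv
  have hKK0 := hKK
  have hab : a < b := KK_lt hKK
  set c := σ⁻¹ v with hcdef
  have hvc : σ c = v := σ.apply_symm_apply v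
  rw [← hvc] at hv ⊢
  have edgeAB : Relation.TransGen (BRmin σ ρ) (σ a) (σ b) :=
    Relation.TransGen.single ⟨(a, b), hKK0, rfl, rfl⟩
  rcases hKK with ⟨hρm, hσm⟩ | ⟨-, x, hxσ, hxρ, hadj⟩
  · -- Type 1 : (a,b) ∈ InvL ρ \ InvL σ
    have hρba : ρ b < ρ a := hρm.2
    have hσab : σ a < σ b := by
      rcases perm_lt_or (x := σ) hab.ne with h1 | h1
      · exact h1
      · exact absurd (mem_invL'.mpr ⟨hab, h1⟩) hσm
    rcases hv with ⟨h1, h2⟩ | ⟨h1, h2⟩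
    swap
    · exact absurd (h1.trans h2) hσab.asymm
    have hcna : c ≠ a := fun hh => absurd h1 (by rw [hh]; exact lt_irrefl _)
    have hcnb : c ≠ b := fun hh => absurd h2 (by rw [hh]; exact lt_irrefl _)
    rcases lt_trichotomy c a with hca | hca | hca
    · have m1 : (c, a) ∈ InvL σ := ⟨hca, h1⟩
      have m2 : ρ a < ρ c := (h m1).2
      have m3 : (c, b) ∈ InvL ρ := ⟨hca.trans hab, hρba.trans m2⟩
      have m4 : (c, b) ∉ InvL σ := fun hm => absurd hm.2 h2.asymm
      exact Or.inr (Relation.TransGen.single ⟨(c, b), Or.inl ⟨m3, m4⟩, rfl, rfl⟩)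
    · exact absurd hca hcna
    · rcases lt_trichotomy c b with hcb | hcb | hcb
      · by_cases hρac : ρ c < ρ a
        · exact Or.inl (Relation.TransGen.single
            ⟨(a, c), Or.inl ⟨⟨hca, hρac⟩, fun hm => absurd hm.2 h1.asymm⟩, rfl, rfl⟩)
        · have hρca : ρ a < ρ c := by
            rcases perm_lt_or (x := ρ) (show a ≠ c from hca.ne) with hh | hh
            · exact hh
            · exact absurd hh hρac
          exact Or.inr (Relation.TransGen.single
            ⟨(c, b), Or.inl ⟨⟨hcb, hρba.trans hρca⟩, fun hm => absurd hm.2 h2.asymm⟩, rfl, rfl⟩)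
      · exact absurd hcb hcnb
      · have m1 : (b, c) ∈ InvL σ := ⟨hcb, h2⟩
        have m2 : ρ c < ρ b := (h m1).2
        exact Or.inl (Relation.TransGen.single
          ⟨(a, c), Or.inl ⟨⟨hab.trans hcb, m2.trans hρba⟩,
            fun hm => absurd hm.2 h1.asymm⟩, rfl, rfl⟩)
  · -- Type 2 : (a,b) ∈ EE via witness x
    rcases perm_lt_or (x := σ) hab.ne with hσab | hσba
    · -- σ a < σ b
      rcases hv with ⟨h1, h2⟩ | ⟨h1, h2⟩
      swap
      · exact absurd (h1.trans h2) hσab.asymm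
      have hcna : c ≠ a := fun hh => absurd h1 (by rw [hh]; exact lt_irrefl _)
      have hcnb : c ≠ b := fun hh => absurd h2 (by rw [hh]; exact lt_irrefl _)
      have hxca : (x c).val ≠ (x a).val := fun hh => hcna (x.injective (Fin.ext hh))
      have hxcb : (x c).val ≠ (x b).val := fun hh => hcnb (x.injective (Fin.ext hh))
      rcases lt_trichotomy c a with hca | hca | hca
      · have m1 : (c, a) ∈ InvL σ := ⟨hca, h1⟩
        have m2 : (x a).val < (x c).val := Fin.lt_def.mp (hxσ m1).2
        have m3 : (x b).val < (x c).val := by have hadj' : (x a).val = (x b).val + 1 ∨ (x b).val = (x a).val + 1 := hadj; rcases hadj' with h' | h' <;> omega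
        have m4 : (c, b) ∈ InvL x := ⟨hca.trans hab, Fin.lt_def.mpr m3⟩
        exact Or.inr (Relation.TransGen.single
          ⟨(c, b), Or.inl ⟨hxρ m4, fun hm => absurd hm.2 h2.asymm⟩, rfl, rfl⟩)
      · exact absurd hca hcna
      · rcases lt_trichotomy c b with hcb | hcb | hcb
        · have hsplit : ((x c).val < (x a).val ∧ (x c).val < (x b).val) ∨
              ((x a).val < (x c).val ∧ (x b).val < (x c).val) := by have hadj' : (x a).val = (x b).val + 1 ∨ (x b).val = (x a).val + 1 := hadj; rcases hadj' with h' | h' <;> omega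
          rcases hsplit with ⟨hs1, -⟩ | ⟨-, hs2⟩
          · have m1 : (a, c) ∈ InvL x := ⟨hca, Fin.lt_def.mpr hs1⟩
            exact Or.inl (Relation.TransGen.single
              ⟨(a, c), Or.inl ⟨hxρ m1, fun hm => absurd hm.2 h1.asymm⟩, rfl, rfl⟩)
          · have m1 : (c, b) ∈ InvL x := ⟨hcb, Fin.lt_def.mpr hs2⟩
            exact Or.inr (Relation.TransGen.single
              ⟨(c, b), Or.inl ⟨hxρ m1, fun hm => absurd hm.2 h2.asymm⟩, rfl, rfl⟩)
        · exact absurd hcb hcnb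
        · have m1 : (b, c) ∈ InvL σ := ⟨hcb, h2⟩
          have m2 : (x c).val < (x b).val := Fin.lt_def.mp (hxσ m1).2
          have m3 : (x c).val < (x a).val := by have hadj' : (x a).val = (x b).val + 1 ∨ (x b).val = (x a).val + 1 := hadj; rcases hadj' with h' | h' <;> omega
          have m4 : (a, c) ∈ InvL x := ⟨hab.trans hcb, Fin.lt_def.mpr m3⟩
          exact Or.inl (Relation.TransGen.single
            ⟨(a, c), Or.inl ⟨hxρ m4, fun hm => absurd hm.2 h1.asymm⟩, rfl, rfl⟩)
    · -- σ b < σ a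
      have m0 : (a, b) ∈ InvL σ := ⟨hab, hσba⟩
      have mx0 : (x b).val < (x a).val := Fin.lt_def.mp (hxσ m0).2
      rcases hv with ⟨h1, h2⟩ | ⟨h1, h2⟩
      · exact absurd (h1.trans h2) hσba.asymm
      -- h1 : σ b < σ c, h2 : σ c < σ a
      have hcna : c ≠ a := fun hh => absurd h2 (by rw [hh]; exact lt_irrefl _)
      have hcnb : c ≠ b := fun hh => absurd h1 (by rw [hh]; exact lt_irrefl _)
      have hxca : (x c).val ≠ (x a).val := fun hh => hcna (x.injective (Fin.ext hh))
      have hxcb : (x c).val ≠ (x b).val := fun hh => hcnb (x.injective (Fin.ext hh))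
      rcases lt_trichotomy c a with hca | hca | hca
      · have m1 : (c, b) ∈ InvL σ := ⟨hca.trans hab, h1⟩
        have m2 : (x b).val < (x c).val := Fin.lt_def.mp (hxσ m1).2
        have m3 : (x a).val < (x c).val := by have hadj' : (x a).val = (x b).val + 1 ∨ (x b).val = (x a).val + 1 := hadj; rcases hadj' with h' | h' <;> omega
        have m4 : (c, a) ∈ InvL x := ⟨hca, Fin.lt_def.mpr m3⟩
        have edgeCA : Relation.TransGen (BRmin σ ρ) (σ c) (σ a) :=
          Relation.TransGen.single
            ⟨(c, a), Or.inl ⟨hxρ m4, fun hm => absurd hm.2 h2.asymm⟩, rfl, rfl⟩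
        exact Or.inr (edgeCA.trans edgeAB)
      · exact absurd hca hcna
      · rcases lt_trichotomy c b with hcb | hcb | hcb
        · have m1 : (a, c) ∈ InvL σ := ⟨hca, h2⟩
          have m2 : (x c).val < (x a).val := Fin.lt_def.mp (hxσ m1).2
          have m1' : (c, b) ∈ InvL σ := ⟨hcb, h1⟩
          have m2' : (x b).val < (x c).val := Fin.lt_def.mp (hxσ m1').2
          exact absurd rfl (by have hadj' : (x a).val = (x b).val + 1 ∨ (x b).val = (x a).val + 1 := hadj; rcases hadj' with h' | h' <;> omega : ¬(0 : ℕ) = 0)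
        · exact absurd hcb hcnb
        · have m1 : (a, c) ∈ InvL σ := ⟨hab.trans hcb, h2⟩
          have m2 : (x c).val < (x a).val := Fin.lt_def.mp (hxσ m1).2
          have m3 : (x c).val < (x b).val := by have hadj' : (x a).val = (x b).val + 1 ∨ (x b).val = (x a).val + 1 := hadj; rcases hadj' with h' | h' <;> omega
          have m4 : (b, c) ∈ InvL x := ⟨hcb, Fin.lt_def.mpr m3⟩
          have edgeBC : Relation.TransGen (BRmin σ ρ) (σ b) (σ c) :=
            Relation.TransGen.single
              ⟨(b, c), Or.inl ⟨hxρ m4, fun hm => absurd hm.2 h1.asymm⟩, rfl, rfl⟩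
          exact Or.inl (edgeAB.trans edgeBC)
end Edge

section EdgeMax
variable {n : ℕ}

lemma nlt {m : ℕ} {x : Equiv.Perm (Fin m)} {p q : Fin m} (hpq : p < q)
    (hn : (p, q) ∉ InvL x) : x p < x q := by
  rcases perm_lt_or (x := x) hpq.ne with h1 | h1
  · exact h1
  · exact absurd (mem_invL'.mpr ⟨hpq, h1⟩) hn

def BRmax {n : ℕ} (σ ρ : Equiv.Perm (Fin (n+1))) : Fin (n+1) → Fin (n+1) → Prop :=
  fun u w => ∃ p, p ∈ KK σ ρ ∧ ρ p.1 = u ∧ ρ p.2 = w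

lemma edge_max {σ ρ : Equiv.Perm (Fin (n+1))} (h : lLE σ ρ) :
    ∀ u w, BRmax σ ρ u w → ∀ v, ((u < v ∧ v < w) ∨ (w < v ∧ v < u)) →
      Relation.TransGen (BRmax σ ρ) u v ∨ Relation.TransGen (BRmax σ ρ) v w := by
  rintro u w ⟨⟨a, b⟩, hKK, rfl, rfl⟩ v hv
  have hKK0 := hKK
  have hab : a < b := KK_lt hKK
  set c := ρ⁻¹ v with hcdef
  have hvc : ρ c = v := ρ.apply_symm_apply v
  rw [← hvc] at hv ⊢
  have edgeAB : Relation.TransGen (BRmax σ ρ) (ρ a) (ρ b) :=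
    Relation.TransGen.single ⟨(a, b), hKK0, rfl, rfl⟩
  rcases hKK with ⟨hρm, hσm⟩ | ⟨-, x, hxσ, hxρ, hadj⟩
  · -- Type 1
    have hρba : ρ b < ρ a := hρm.2
    have hσab : σ a < σ b := nlt hab hσm
    rcases hv with ⟨h1, h2⟩ | ⟨h1, h2⟩
    · exact absurd (h1.trans h2) hρba.asymm
    -- h1 : ρ b < ρ c, h2 : ρ c < ρ a
    have hcna : c ≠ a := fun hh => absurd h2 (by rw [hh]; exact lt_irrefl _)
    have hcnb : c ≠ b := fun hh => absurd h1 (by rw [hh]; exact lt_irrefl _)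
    rcases lt_trichotomy c a with hca | hca | hca
    · have m1 : (c, a) ∉ InvL ρ := fun hm => absurd hm.2 h2.asymm
      have hσca : σ c < σ a := nlt hca (fun hm => m1 (h hm))
      have m3 : (c, b) ∈ InvL ρ := ⟨hca.trans hab, h1⟩
      have m4 : (c, b) ∉ InvL σ := fun hm => absurd hm.2 (hσca.trans hσab).asymm
      exact Or.inr (Relation.TransGen.single ⟨(c, b), Or.inl ⟨m3, m4⟩, rfl, rfl⟩)
    · exact absurd hca hcna
    · rcases lt_trichotomy c b with hcb | hcb | hcb
      · by_cases hσac : σ a < σ c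
        · exact Or.inl (Relation.TransGen.single
            ⟨(a, c), Or.inl ⟨⟨hca, h2⟩, fun hm => absurd hm.2 hσac.asymm⟩, rfl, rfl⟩)
        · have hσca : σ c < σ a := by
            rcases perm_lt_or (x := σ) hcna with hh | hh
            · exact hh
            · exact absurd hh hσac
          exact Or.inr (Relation.TransGen.single
            ⟨(c, b), Or.inl ⟨⟨hcb, h1⟩,
              fun hm => absurd hm.2 (hσca.trans hσab).asymm⟩, rfl, rfl⟩)
      · exact absurd hcb hcnb
      · have m1 : (b, c) ∉ InvL ρ := fun hm => absurd hm.2 h1.asymm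
        have hσbc : σ b < σ c := nlt hcb (fun hm => m1 (h hm))
        exact Or.inl (Relation.TransGen.single
          ⟨(a, c), Or.inl ⟨⟨hab.trans hcb, h2⟩,
            fun hm => absurd hm.2 (hσab.trans hσbc).asymm⟩, rfl, rfl⟩)
  · -- Type 2
    have hadj' : (x a).val = (x b).val + 1 ∨ (x b).val = (x a).val + 1 := hadj
    rcases perm_lt_or (x := ρ) hab.ne with hρab | hρba
    · -- ρ a < ρ b
      have m0 : (a, b) ∉ InvL ρ := fun hm => absurd hm.2 hρab.asymm
      have hxab : x a < x b := nlt hab (fun hm => m0 (hxρ hm))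
      rcases hv with ⟨h1, h2⟩ | ⟨h1, h2⟩
      swap
      · exact absurd (h1.trans h2) hρab.asymm
      have hcna : c ≠ a := fun hh => absurd h1 (by rw [hh]; exact lt_irrefl _)
      have hcnb : c ≠ b := fun hh => absurd h2 (by rw [hh]; exact lt_irrefl _)
      have hxca : (x c).val ≠ (x a).val := fun hh => hcna (x.injective (Fin.ext hh))
      have hxcb : (x c).val ≠ (x b).val := fun hh => hcnb (x.injective (Fin.ext hh))
      have hxab' : (x a).val < (x b).val := hxab
      rcases lt_trichotomy c a with hca | hca | hca
      · have m1 : (c, a) ∈ InvL ρ := ⟨hca, h1⟩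
        by_cases hmx : (c, a) ∈ InvL x
        · have hxc : (x a).val < (x c).val := Fin.lt_def.mp (mem_invL'.mp hmx).2
          have m2 : (c, b) ∈ InvL x := mem_invL'.mpr
            ⟨hca.trans hab, Fin.lt_def.mpr (by rcases hadj' with h' | h' <;> omega)⟩
          exact absurd (mem_invL'.mp (hxρ m2)).2 h2.asymm
        · have m4 : (c, a) ∉ InvL σ := fun hm => hmx (hxσ hm)
          have edgeCA : Relation.TransGen (BRmax σ ρ) (ρ c) (ρ a) :=
            Relation.TransGen.single ⟨(c, a), Or.inl ⟨m1, m4⟩, rfl, rfl⟩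
          exact Or.inr (edgeCA.trans edgeAB)
      · exact absurd hca hcna
      · rcases lt_trichotomy c b with hcb | hcb | hcb
        · by_cases hmx : (a, c) ∈ InvL x
          · exact absurd (mem_invL'.mp (hxρ hmx)).2 h1.asymm
          · have hxac : (x a).val < (x c).val := Fin.lt_def.mp (nlt hca hmx)
            have m2 : (c, b) ∈ InvL x := mem_invL'.mpr
              ⟨hcb, Fin.lt_def.mpr (by rcases hadj' with h' | h' <;> omega)⟩
            exact absurd (mem_invL'.mp (hxρ m2)).2 h2.asymm
        · exact absurd hcb hcnb
        · have m1 : (b, c) ∈ InvL ρ := ⟨hcb, h2⟩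
          by_cases hmx : (b, c) ∈ InvL x
          · have hxc : (x c).val < (x b).val := Fin.lt_def.mp (mem_invL'.mp hmx).2
            have m2 : (a, c) ∈ InvL x := mem_invL'.mpr
              ⟨hab.trans hcb, Fin.lt_def.mpr (by rcases hadj' with h' | h' <;> omega)⟩
            exact absurd (mem_invL'.mp (hxρ m2)).2 h1.asymm
          · have m4 : (b, c) ∉ InvL σ := fun hm => hmx (hxσ hm)
            have edgeBC : Relation.TransGen (BRmax σ ρ) (ρ b) (ρ c) :=
              Relation.TransGen.single ⟨(b, c), Or.inl ⟨m1, m4⟩, rfl, rfl⟩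
            exact Or.inl (edgeAB.trans edgeBC)
    · -- ρ b < ρ a
      rcases hv with ⟨h1, h2⟩ | ⟨h1, h2⟩
      · exact absurd (h1.trans h2) hρba.asymm
      have hcna : c ≠ a := fun hh => absurd h2 (by rw [hh]; exact lt_irrefl _)
      have hcnb : c ≠ b := fun hh => absurd h1 (by rw [hh]; exact lt_irrefl _)
      have hxca : (x c).val ≠ (x a).val := fun hh => hcna (x.injective (Fin.ext hh))
      have hxcb : (x c).val ≠ (x b).val := fun hh => hcnb (x.injective (Fin.ext hh))
      by_cases hmx0 : (a, b) ∈ InvL x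
      · have hxba : (x b).val < (x a).val := Fin.lt_def.mp (mem_invL'.mp hmx0).2
        rcases lt_trichotomy c a with hca | hca | hca
        · have m1 : (c, a) ∉ InvL ρ := fun hm => absurd hm.2 h2.asymm
          have hxc : (x c).val < (x a).val :=
            Fin.lt_def.mp (nlt hca (fun hm => m1 (hxρ hm)))
          have m3 : (c, b) ∈ InvL ρ := ⟨hca.trans hab, h1⟩
          have m4 : (c, b) ∉ InvL σ := fun hm =>
            absurd (Fin.lt_def.mp (mem_invL'.mp (hxσ hm)).2) (by rcases hadj' with h' | h' <;> omega)
          exact Or.inr (Relation.TransGen.single ⟨(c, b), Or.inl ⟨m3, m4⟩, rfl, rfl⟩)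
        · exact absurd hca hcna
        · rcases lt_trichotomy c b with hcb | hcb | hcb
          · have hside : (x c).val < (x b).val ∨ (x a).val < (x c).val := by
              rcases hadj' with h' | h' <;> omega
            rcases hside with hs | hs
            · have m3 : (c, b) ∈ InvL ρ := ⟨hcb, h1⟩
              have m4 : (c, b) ∉ InvL σ := fun hm =>
                absurd (Fin.lt_def.mp (mem_invL'.mp (hxσ hm)).2) (by omega)
              exact Or.inr (Relation.TransGen.single ⟨(c, b), Or.inl ⟨m3, m4⟩, rfl, rfl⟩)
            · have m3 : (a, c) ∈ InvL ρ := ⟨hca, h2⟩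
              have m4 : (a, c) ∉ InvL σ := fun hm =>
                absurd (Fin.lt_def.mp (mem_invL'.mp (hxσ hm)).2) (by omega)
              exact Or.inl (Relation.TransGen.single ⟨(a, c), Or.inl ⟨m3, m4⟩, rfl, rfl⟩)
          · exact absurd hcb hcnb
          · have m1 : (b, c) ∉ InvL ρ := fun hm => absurd hm.2 h1.asymm
            have hxc : (x b).val < (x c).val :=
              Fin.lt_def.mp (nlt hcb (fun hm => m1 (hxρ hm)))
            have m3 : (a, c) ∈ InvL ρ := ⟨hab.trans hcb, h2⟩
            have m4 : (a, c) ∉ InvL σ := fun hm =>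
              absurd (Fin.lt_def.mp (mem_invL'.mp (hxσ hm)).2) (by rcases hadj' with h' | h' <;> omega)
            exact Or.inl (Relation.TransGen.single ⟨(a, c), Or.inl ⟨m3, m4⟩, rfl, rfl⟩)
      · have hσab : σ a < σ b := nlt hab (fun hm => hmx0 (hxσ hm))
        rcases lt_trichotomy c a with hca | hca | hca
        · have m1 : (c, a) ∉ InvL ρ := fun hm => absurd hm.2 h2.asymm
          have hσca : σ c < σ a := nlt hca (fun hm => m1 (h hm))
          have m3 : (c, b) ∈ InvL ρ := ⟨hca.trans hab, h1⟩
          have m4 : (c, b) ∉ InvL σ := fun hm => absurd hm.2 (hσca.trans hσab).asymm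
          exact Or.inr (Relation.TransGen.single ⟨(c, b), Or.inl ⟨m3, m4⟩, rfl, rfl⟩)
        · exact absurd hca hcna
        · rcases lt_trichotomy c b with hcb | hcb | hcb
          · by_cases hσac : σ a < σ c
            · exact Or.inl (Relation.TransGen.single
                ⟨(a, c), Or.inl ⟨⟨hca, h2⟩, fun hm => absurd hm.2 hσac.asymm⟩, rfl, rfl⟩)
            · have hσca : σ c < σ a := by
                rcases perm_lt_or (x := σ) hcna with hh | hh
                · exact hh
                · exact absurd hh hσac
              exact Or.inr (Relation.TransGen.single
                ⟨(c, b), Or.inl ⟨⟨hcb, h1⟩,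
                  fun hm => absurd hm.2 (hσca.trans hσab).asymm⟩, rfl, rfl⟩)
          · exact absurd hcb hcnb
          · have m1 : (b, c) ∉ InvL ρ := fun hm => absurd hm.2 h1.asymm
            have hσbc : σ b < σ c := nlt hcb (fun hm => m1 (h hm))
            exact Or.inl (Relation.TransGen.single
              ⟨(a, c), Or.inl ⟨⟨hab.trans hcb, h2⟩,
                fun hm => absurd hm.2 (hσab.trans hσbc).asymm⟩, rfl, rfl⟩)
end EdgeMax


/-- For the equivalence class `C` of a left weak Bruhat interval `[σ,ρ]_L` under
descent-preserving isomorphism, both `min(C)` (the set of minima of intervals in `C`)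
and `max(C)` (the set of maxima) are right weak Bruhat intervals. -/
theorem minC_maxC_are_right_intervals {n : ℕ} (σ ρ : Equiv.Perm (Fin (n + 1)))
    (h : lLE σ ρ) :
    (∃ a b, rLE a b ∧ {a' | ∃ b', DPEquiv σ ρ a' b'} = rInterval a b) ∧
    (∃ a b, rLE a b ∧ {b' | ∃ a', DPEquiv σ ρ a' b'} = rInterval a b) := by
  constructor
  · obtain ⟨a, b, hab, heq⟩ := generic_interval (BRmin σ ρ) (edge_min h) σ
      (by rintro u w ⟨p, hp, rfl, rfl⟩
          simp only [Equiv.Perm.inv_apply_self]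
          exact KK_lt hp)
    refine ⟨a, b, hab, ?_⟩
    rw [← heq]
    ext γ
    simp only [Set.mem_setOf_eq]
    have h2 : ∀ v, (σ⁻¹ * γ)⁻¹ v = γ⁻¹ (σ v) := by
      intro v; rw [mul_inv_rev, inv_inv]; rfl
    constructor
    · rintro ⟨b', hdp⟩ u w ⟨p, hp, rfl, rfl⟩
      obtain ⟨-, hK⟩ := core2 hdp
      have h1 := hK p hp
      rw [h2, h2] at h1
      exact h1
    · intro hγ
      have hg : ∀ p ∈ KK σ ρ, (σ⁻¹ * γ)⁻¹ p.1 < (σ⁻¹ * γ)⁻¹ p.2 := by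
        intro p hp
        rw [h2, h2]
        exact hγ _ _ ⟨p, hp, rfl, rfl⟩
      have hc := core1 h hg
      have hσγ : σ * (σ⁻¹ * γ) = γ := by rw [← mul_assoc, mul_inv_cancel, one_mul]
      rw [hσγ] at hc
      exact ⟨_, hc⟩
  · obtain ⟨a, b, hab, heq⟩ := generic_interval (BRmax σ ρ) (edge_max h) ρ
      (by rintro u w ⟨p, hp, rfl, rfl⟩
          simp only [Equiv.Perm.inv_apply_self]
          exact KK_lt hp)
    refine ⟨a, b, hab, ?_⟩
    rw [← heq]
    ext γ
    simp only [Set.mem_setOf_eq]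
    have h2 : ∀ v, (ρ⁻¹ * γ)⁻¹ v = γ⁻¹ (ρ v) := by
      intro v; rw [mul_inv_rev, inv_inv]; rfl
    constructor
    · rintro ⟨a', hdp⟩ u w ⟨p, hp, rfl, rfl⟩
      obtain ⟨hb', hK⟩ := core2 hdp
      have h1 := hK p hp
      have h3 : ∀ v, (σ⁻¹ * a')⁻¹ v = γ⁻¹ (ρ v) := by
        intro v
        rw [hb', mul_inv_rev]
        simp [Equiv.Perm.mul_apply]
      rw [h3, h3] at h1
      exact h1
    · intro hγ
      have hg : ∀ p ∈ KK σ ρ, (ρ⁻¹ * γ)⁻¹ p.1 < (ρ⁻¹ * γ)⁻¹ p.2 := by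
        intro p hp
        rw [h2, h2]
        exact hγ _ _ ⟨p, hp, rfl, rfl⟩
      have hc := core1 h hg
      have hργ : ρ * (ρ⁻¹ * γ) = γ := by rw [← mul_assoc, mul_inv_cancel, one_mul]
      rw [hργ] at hc
      exact ⟨_, hc⟩
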